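/- Let G=(V,E) be an undirected graph and h an integer-valued intersecting supermodular set function on the subsets of V with h(V)=0. There exists an orientation of the edges of G such that the resulting digraph satisfies d^-(X) ≥ h(X) for every nonempty subset X of V, if and only if e_E(𝒫) ≥ Σ_{X∈𝒫} h(X) for every subpartition 𝒫 of V. (Frank's orientation theorem) -/

import Mathlib

/- Common definitions for formalizing packing-of-arborescences theorems.

Conventions:
* A digraph on a finite vertex type `V` is given by a finite multiset of arcs
  `A : Multiset (V × V)`, an arc `(u, v)` having tail `u` and head `v`.
* An undirected (multi)graph is given by a multiset of edges `E : Multiset (V × V)`,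
  an edge being recorded as an (arbitrarily ordered) pair of its endpoints.
* A multiset `S` of vertices (e.g. of roots) is given by a finite index type `S`
  together with a placement map `π : S → V`; the multiplicity of a vertex `v` is
  the size of the fiber over `v`.
* A dypergraph is given by a multiset `𝒜 : Multiset (Finset V × V)` of dyperedges
  `(Z, z)` with tail set `Z` and head `z`; a hypergraph by a multiset
  `ℰ : Multiset (Finset V)` of hyperedges. -/

attribute [local instance] Classical.propDecidable

noncomputable section

namespace ArborPaper

variable {V : Type*} [Fintype V] [DecidableEq V]

/-- An arc `a = (u, v)` (tail `u`, head `v`) enters `X` if its head is in `X`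
and its tail is outside. -/
def arcEnters (a : V × V) (X : Finset V) : Prop := a.2 ∈ X ∧ a.1 ∉ X

/-- An undirected edge (given by a pair of endpoints) enters `X` if exactly one of
its endpoints is in `X`. -/
def edgeEnters (e : V × V) (X : Finset V) : Prop :=
  (e.1 ∈ X ∧ e.2 ∉ X) ∨ (e.2 ∈ X ∧ e.1 ∉ X)

/-- The in-degree `d⁻_A(X)` of a vertex set `X`. -/
def inDeg (A : Multiset (V × V)) (X : Finset V) : ℕ :=
  (A.filter fun a => arcEnters a X).card

/-- The in-degree of a single vertex. -/
def inDegV (A : Multiset (V × V)) (v : V) : ℕ :=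
  (A.filter fun a => a.2 = v).card

/-- Reachability by a directed path using the arcs of `A`. -/
def Reaches (A : Multiset (V × V)) (u v : V) : Prop :=
  Relation.ReflTransGen (fun x y => (x, y) ∈ A) u v

/-- `P_D^X` : the set of vertices from which some vertex of `X` is reachable. -/
def PD (A : Multiset (V × V)) (X : Finset V) : Finset V :=
  Finset.univ.filter fun u => ∃ v ∈ X, Reaches A u v

/-- `Q_D^X` : the set of vertices reachable from some vertex of `X`. -/
def QD (A : Multiset (V × V)) (X : Finset V) : Finset V :=
  Finset.univ.filter fun v => ∃ u ∈ X, Reaches A u v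

/-- `C` is a strongly connected component of the digraph `(V, A)`. -/
def IsSCCD (A : Multiset (V × V)) (C : Finset V) : Prop :=
  ∃ v : V, C = Finset.univ.filter fun u => Reaches A u v ∧ Reaches A v u

/-- `B` is an `s`-arborescence with vertex set `U` : all arcs lie inside `U`,
every vertex of `U` other than `s` has in-degree exactly `1`, the root has
in-degree `0`, and every vertex of `U` is reachable from `s`
(equivalently: no circuit and all in-degrees of non-root vertices equal `1`). -/
def IsArborOn (B : Multiset (V × V)) (U : Finset V) (s : V) : Prop :=
  s ∈ U ∧ (∀ a ∈ B, a.1 ∈ U ∧ a.2 ∈ U) ∧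
  (∀ v ∈ U, v ≠ s → inDegV B v = 1) ∧ inDegV B s = 0 ∧
  ∀ v ∈ U, Reaches B s v

/-- `B` is a spanning `s`-arborescence (vertex set all of `V`). -/
def IsSpanningArbor (B : Multiset (V × V)) (s : V) : Prop :=
  IsArborOn B Finset.univ s

/-- One step along a mixed graph: an arc of `A`, or an edge of `E` in either direction. -/
def MStep (E A : Multiset (V × V)) (u v : V) : Prop :=
  (u, v) ∈ A ∨ (u, v) ∈ E ∨ (v, u) ∈ E

/-- Reachability by a mixed path in the mixed graph `(V, E ∪ A)`. -/
def MReaches (E A : Multiset (V × V)) (u v : V) : Prop :=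
  Relation.ReflTransGen (MStep E A) u v

/-- `P_F^X` for a mixed graph `F = (V, E ∪ A)`. -/
def PF (E A : Multiset (V × V)) (X : Finset V) : Finset V :=
  Finset.univ.filter fun u => ∃ v ∈ X, MReaches E A u v

/-- `Q_F^X` for a mixed graph `F = (V, E ∪ A)`. -/
def QF (E A : Multiset (V × V)) (X : Finset V) : Finset V :=
  Finset.univ.filter fun v => ∃ u ∈ X, MReaches E A u v

/-- `C` is a strongly connected component of the mixed graph `(V, E ∪ A)`. -/
def IsSCC (E A : Multiset (V × V)) (C : Finset V) : Prop :=
  ∃ v : V, C = Finset.univ.filter fun u => MReaches E A u v ∧ MReaches E A v u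

/-- `e_{E∪A}(𝒫)` : the number of edges of `E` and arcs of `A` entering at least one
member of the family `P`. -/
def eMixed (E A : Multiset (V × V)) (P : Finset (Finset V)) : ℕ :=
  (E.filter fun e => ∃ X ∈ P, edgeEnters e X).card +
  (A.filter fun a => ∃ X ∈ P, arcEnters a X).card

/-- A subpartition of `V` : a set of pairwise disjoint nonempty subsets. -/
def IsSubpartition (P : Finset (Finset V)) : Prop :=
  (∀ X ∈ P, X.Nonempty) ∧ ∀ X ∈ P, ∀ Y ∈ P, X ≠ Y → Disjoint X Y

/-- `Eo` is an orientation of the multiset `E` of undirected edges: each edge is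
kept or swapped. -/
def IsOrientationOf (E Eo : Multiset (V × V)) : Prop :=
  Multiset.Rel (fun e a => a = e ∨ a = Prod.swap e) E Eo

/-- The rank function of a matroid on a finite ground type `S`. -/
structure RankFn (S : Type*) [Fintype S] [DecidableEq S] where
  r : Finset S → ℕ
  rank_le_card : ∀ X : Finset S, r X ≤ X.card
  mono : ∀ ⦃X Y : Finset S⦄, X ⊆ Y → r X ≤ r Y
  submodular : ∀ X Y : Finset S, r (X ∪ Y) + r (X ∩ Y) ≤ r X + r Y

/-- `B` is a basis of `T` in the matroid with rank function `M` : an independent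
subset of `T` of full rank in `T`. -/
def RankFn.IsBasisOf {S : Type*} [Fintype S] [DecidableEq S] (M : RankFn S)
    (B T : Finset S) : Prop :=
  B ⊆ T ∧ M.r B = B.card ∧ M.r B = M.r T

/-- A dyperedge `a = (Z, z)` enters `X` if its head `z` is in `X` and some tail
vertex lies outside `X`. -/
def dypEnters (a : Finset V × V) (X : Finset V) : Prop :=
  a.2 ∈ X ∧ (a.1 \ X).Nonempty

/-- The in-degree `d⁻_𝒜(X)` in a dypergraph. -/
def dypInDeg (𝒜 : Multiset (Finset V × V)) (X : Finset V) : ℕ :=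
  (𝒜.filter fun a => dypEnters a X).card

/-- A hyperedge `e` enters `X` if it meets both `X` and its complement. -/
def hypEnters (e X : Finset V) : Prop := (e ∩ X).Nonempty ∧ (e \ X).Nonempty

/-- `e_{ℰ∪𝒜}(𝒫)` for a mixed hypergraph: the number of hyperedges of `ℰ` and
dyperedges of `𝒜` entering at least one member of `P`. -/
def eMH (ℰ : Multiset (Finset V)) (𝒜 : Multiset (Finset V × V))
    (P : Finset (Finset V)) : ℕ :=
  (ℰ.filter fun e => ∃ X ∈ P, hypEnters e X).card +
  (𝒜.filter fun a => ∃ X ∈ P, dypEnters a X).card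

/-- `B` is obtained from the multiset `𝒵` of dyperedges by trimming each
dyperedge `(Z, z)` to an arc `(y, z)` with `y ∈ Z`. -/
def Trims (𝒵 : Multiset (Finset V × V)) (B : Multiset (V × V)) : Prop :=
  Multiset.Rel (fun a b => b.2 = a.2 ∧ b.1 ∈ a.1) 𝒵 B

/-- `𝒟` is an orientation of the multiset `ℰ` of hyperedges: each hyperedge `X`
is replaced by a dyperedge `(X − x, x)` for some `x ∈ X`. -/
def Orients (ℰ : Multiset (Finset V)) (𝒟 : Multiset (Finset V × V)) : Prop :=
  Multiset.Rel (fun e a => a.2 ∈ e ∧ a.1 = e.erase a.2) ℰ 𝒟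

set_option linter.unusedSectionVars false
set_option linter.unnecessarySimpa false
set_option linter.unnecessarySeqFocus false

def cnt (E : Multiset (V × V)) (P : Finset (Finset V)) : ℕ :=
  (E.filter fun f => ∃ X ∈ P, edgeEnters f X).card

lemma card_filter_cons {α : Type*} (p : α → Prop) [DecidablePred p] (a : α) (s : Multiset α) :
    ((a ::ₘ s).filter p).card = (if p a then 1 else 0) + (s.filter p).card := by
  by_cases h : p a
  · rw [Multiset.filter_cons_of_pos (p := p) _ h]; simp [h]; omega
  · rw [Multiset.filter_cons_of_neg (p := p) _ h]; simp [h]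

lemma cnt_cons (e : V × V) (E : Multiset (V × V)) (P : Finset (Finset V)) :
    cnt (e ::ₘ E) P = (if ∃ X ∈ P, edgeEnters e X then 1 else 0) + cnt E P := by
  unfold cnt
  by_cases h : ∃ X ∈ P, edgeEnters e X
  · rw [Multiset.filter_cons_of_pos (p := fun f => ∃ X ∈ P, edgeEnters f X) _ h]; simp [h]; omega
  · rw [Multiset.filter_cons_of_neg (p := fun f => ∃ X ∈ P, edgeEnters f X) _ h]; simp [h]

lemma card_filter_pair_le {α : Type*} (s : Multiset α) (p q r t : α → Prop)
    [DecidablePred p] [DecidablePred q] [DecidablePred r] [DecidablePred t]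
    (hb : ∀ x, ((if p x then 1 else 0) + (if q x then 1 else 0) : ℕ) ≤
      (if r x then 1 else 0) + (if t x then 1 else 0)) :
    (s.filter p).card + (s.filter q).card ≤ (s.filter r).card + (s.filter t).card := by
  induction s using Multiset.induction_on with
  | empty => simp
  | cons a s ih =>
    rw [card_filter_cons p, card_filter_cons q, card_filter_cons r, card_filter_cons t]
    have := hb a
    omega

lemma star (h : Finset V → ℤ)
    (hsup : ∀ X Y : Finset V, (X ∩ Y).Nonempty → h X + h Y ≤ h (X ∩ Y) + h (X ∪ Y))
    (X : Finset V) (Ys : Finset (Finset V))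
    (hd : ∀ Y₁ ∈ Ys, ∀ Y₂ ∈ Ys, Y₁ ≠ Y₂ → Disjoint Y₁ Y₂)
    (hm : ∀ Y ∈ Ys, (X ∩ Y).Nonempty) :
    h X + ∑ Y ∈ Ys, h Y ≤ (∑ Y ∈ Ys, h (X ∩ Y)) + h (X ∪ Ys.sup id) := by
  induction Ys using Finset.induction_on with
  | empty => simp
  | @insert Y Ys hY ih =>
    have hd' : ∀ Y₁ ∈ Ys, ∀ Y₂ ∈ Ys, Y₁ ≠ Y₂ → Disjoint Y₁ Y₂ := fun a ha b hb =>
      hd a (Finset.mem_insert_of_mem ha) b (Finset.mem_insert_of_mem hb)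
    have hm' : ∀ Y' ∈ Ys, (X ∩ Y').Nonempty := fun a ha => hm a (Finset.mem_insert_of_mem ha)
    have ihh := ih hd' hm'
    have hint : (X ∪ Ys.sup id) ∩ Y = X ∩ Y := by
      ext a
      simp only [Finset.mem_inter, Finset.mem_union]
      constructor
      · rintro ⟨ha | ha, haY⟩
        · exact ⟨ha, haY⟩
        · rcases Finset.mem_sup.1 ha with ⟨Y', hY', haY'⟩
          have hne : Y' ≠ Y := fun he => hY (he ▸ hY')
          exact absurd haY (Finset.disjoint_left.1
            (hd Y' (Finset.mem_insert_of_mem hY') Y (Finset.mem_insert_self _ _) hne) haY')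
      · rintro ⟨ha, haY⟩; exact ⟨Or.inl ha, haY⟩
    have hne : ((X ∪ Ys.sup id) ∩ Y).Nonempty := by
      rw [hint]; exact hm Y (Finset.mem_insert_self _ _)
    have key := hsup (X ∪ Ys.sup id) Y hne
    rw [hint] at key
    have huni : X ∪ Ys.sup id ∪ Y = X ∪ (insert Y Ys).sup id := by
      rw [Finset.sup_insert]
      ext a; simp only [Finset.mem_union, Finset.sup_eq_union, id, Finset.mem_union]
      tauto
    rw [huni] at key
    rw [Finset.sum_insert hY, Finset.sum_insert hY]
    linarith

lemma build (h : Finset V → ℤ)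
    (hsup : ∀ X Y : Finset V, (X ∩ Y).Nonempty → h X + h Y ≤ h (X ∩ Y) + h (X ∪ Y)) :
    ∀ (A B : Finset (Finset V)), IsSubpartition A → IsSubpartition B →
    ∃ K F : Finset (Finset V), IsSubpartition K ∧ IsSubpartition F ∧
      (∀ O ∈ A, ∃ U ∈ F, O ⊆ U) ∧
      (∀ O ∈ B, ∃ U ∈ F, O ⊆ U) ∧
      (∀ U ∈ F, ∀ a ∈ U, (∃ O ∈ A, a ∈ O ∧ O ⊆ U) ∨ (∃ O ∈ B, a ∈ O ∧ O ⊆ U)) ∧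
      (∀ M ∈ K, ∃ X ∈ A, ∃ U ∈ F, X ⊆ U ∧ M ⊆ X ∧
        ∀ a ∈ M, ∃ O ∈ B, a ∈ O ∧ O ⊆ U ∧ O ∩ X ⊆ M) ∧
      ((∑ X ∈ A, h X) + ∑ Y ∈ B, h Y ≤ (∑ M ∈ K, h M) + ∑ U ∈ F, h U) := by
  intro A
  induction A using Finset.strongInduction with
  | _ A ih =>
  intro B hA hB
  rcases Finset.eq_empty_or_nonempty A with rfl | ⟨X, hX⟩
  · refine ⟨∅, B, ⟨by simp, by simp⟩, hB, by simp, ?_, ?_, by simp, by simp⟩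
    · exact fun O hO => ⟨O, hO, Finset.Subset.refl O⟩
    · exact fun U hU a ha => Or.inr ⟨U, hU, ha, Finset.Subset.refl U⟩
  · -- step
    set Ys := B.filter (fun Y => (X ∩ Y).Nonempty) with hYs
    set Yc := B.filter (fun Y => ¬ (X ∩ Y).Nonempty) with hYc
    set S := Ys.sup id with hS
    set Z := X ∪ S with hZ
    set A' := A.erase X with hA'
    set B' := insert Z Yc with hB'
    have hXne : X.Nonempty := hA.1 X hX
    have hXZ : X ⊆ Z := Finset.subset_union_left
    have hYsB : ∀ Y ∈ Ys, Y ∈ B := fun Y hY => (Finset.mem_filter.1 hY).1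
    have hYsm : ∀ Y ∈ Ys, (X ∩ Y).Nonempty := fun Y hY => (Finset.mem_filter.1 hY).2
    have hYcB : ∀ Y ∈ Yc, Y ∈ B := fun Y hY => (Finset.mem_filter.1 hY).1
    have hYcX : ∀ Y ∈ Yc, X ∩ Y = ∅ := fun Y hY =>
      Finset.not_nonempty_iff_eq_empty.1 (Finset.mem_filter.1 hY).2
    have hYsZ : ∀ Y ∈ Ys, Y ⊆ Z := by
      intro Y hY
      exact Finset.Subset.trans (Finset.le_sup (f := id) hY) Finset.subset_union_right
    have hmemS : ∀ a, a ∈ S ↔ ∃ Y ∈ Ys, a ∈ Y := by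
      intro a; rw [hS, Finset.mem_sup]; simp
    have hmemZ : ∀ a, a ∈ Z → a ∈ X ∨ ∃ Y ∈ Ys, a ∈ Y := by
      intro a ha
      rcases Finset.mem_union.1 ha with ha | ha
      · exact Or.inl ha
      · exact Or.inr ((hmemS a).1 ha)
    -- disjointness of Z from Yc members
    have hZYc : ∀ W ∈ Yc, Disjoint Z W := by
      intro W hW
      rw [Finset.disjoint_left]
      intro a haZ haW
      rcases hmemZ a haZ with ha | ⟨Y, hY, haY⟩
      · have := hYcX W hW
        have : a ∈ X ∩ W := Finset.mem_inter.2 ⟨ha, haW⟩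
        simp_all
      · have hne : Y ≠ W := by
          intro he; subst he
          have := hYcX Y hW
          rcases hYsm Y hY with ⟨b, hb⟩
          simp_all
        exact Finset.disjoint_left.1 (hB.2 Y (hYsB Y hY) W (hYcB W hW) hne) haY haW
    have hZne : Z.Nonempty := hXne.mono hXZ
    have hB'sub : IsSubpartition B' := by
      constructor
      · intro W hW
        rcases Finset.mem_insert.1 hW with rfl | hW
        · exact hZne
        · exact hB.1 W (hYcB W hW)
      · intro W₁ h₁ W₂ h₂ hne
        rcases Finset.mem_insert.1 h₁ with rfl | h₁ <;> rcases Finset.mem_insert.1 h₂ with rfl | h₂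
        · exact absurd rfl hne
        · exact hZYc W₂ h₂
        · exact (hZYc W₁ h₁).symm
        · exact hB.2 W₁ (hYcB W₁ h₁) W₂ (hYcB W₂ h₂) hne
    have hA'sub : IsSubpartition A' := by
      constructor
      · exact fun O hO => hA.1 O (Finset.mem_of_mem_erase hO)
      · exact fun O₁ h₁ O₂ h₂ hne =>
          hA.2 O₁ (Finset.mem_of_mem_erase h₁) O₂ (Finset.mem_of_mem_erase h₂) hne
    have hA'A : ∀ O ∈ A', O ∈ A ∧ O ≠ X := by
      intro O hO; exact ⟨Finset.mem_of_mem_erase hO, Finset.ne_of_mem_erase hO⟩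
    have hA'X : ∀ O ∈ A', Disjoint O X := by
      intro O hO
      exact hA.2 O (hA'A O hO).1 X hX (hA'A O hO).2
    obtain ⟨K₀, F₀, hK₀, hF₀, g1a, g1b, g1c, g2, g3⟩ :=
      ih A' (Finset.erase_ssubset hX) B' hA'sub hB'sub
    obtain ⟨UZ, hUZF, hZUZ⟩ := g1b Z (Finset.mem_insert_self _ _)
    -- K₀ members sit inside members of A'
    have hK₀X : ∀ M ∈ K₀, ∃ X' ∈ A', M ⊆ X' := by
      intro M hM
      obtain ⟨X', hX', _, _, _, hMX', _⟩ := g2 M hM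
      exact ⟨X', hX', hMX'⟩
    set Knew := Ys.image (fun Y => X ∩ Y) with hKnew
    set K := K₀ ∪ Knew with hK
    have hKnewmem : ∀ N ∈ Knew, ∃ Y ∈ Ys, N = X ∩ Y := by
      intro N hN
      obtain ⟨Y, hY, hNY⟩ := Finset.mem_image.1 hN
      exact ⟨Y, hY, hNY.symm⟩
    have hdisK : ∀ M ∈ K₀, ∀ N ∈ Knew, Disjoint M N := by
      intro M hM N hN
      obtain ⟨X', hX', hMX'⟩ := hK₀X M hM
      obtain ⟨Y, hY, rfl⟩ := hKnewmem N hN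
      have : Disjoint X' X := hA'X X' hX'
      exact (this.mono hMX' Finset.inter_subset_left)
    have hK₀Knew : Disjoint K₀ Knew := by
      rw [Finset.disjoint_left]
      intro M hM hM'
      obtain ⟨Y, hY, rfl⟩ := hKnewmem M hM'
      have h1 : Disjoint (X ∩ Y) (X ∩ Y) := hdisK _ hM _ hM'
      rcases hYsm Y hY with ⟨b, hb⟩
      exact (Finset.disjoint_left.1 h1 hb) hb
    have hKsub : IsSubpartition K := by
      constructor
      · intro M hM
        rcases Finset.mem_union.1 hM with hM | hM
        · exact hK₀.1 M hM
        · obtain ⟨Y, hY, rfl⟩ := hKnewmem M hM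
          exact hYsm Y hY
      · intro M₁ h₁ M₂ h₂ hne
        rcases Finset.mem_union.1 h₁ with h₁ | h₁ <;> rcases Finset.mem_union.1 h₂ with h₂ | h₂
        · exact hK₀.2 M₁ h₁ M₂ h₂ hne
        · exact hdisK M₁ h₁ M₂ h₂
        · exact (hdisK M₂ h₂ M₁ h₁).symm
        · obtain ⟨Y₁, hY₁, rfl⟩ := hKnewmem M₁ h₁
          obtain ⟨Y₂, hY₂, rfl⟩ := hKnewmem M₂ h₂
          have hYne : Y₁ ≠ Y₂ := by rintro rfl; exact hne rfl
          exact Finset.disjoint_left.2 (fun a ha ha' => Finset.disjoint_left.1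
            (hB.2 Y₁ (hYsB _ hY₁) Y₂ (hYsB _ hY₂) hYne)
            (Finset.mem_inter.1 ha).2 (Finset.mem_inter.1 ha').2)
    refine ⟨K, F₀, hKsub, hF₀, ?_, ?_, ?_, ?_, ?_⟩
    · -- every O ∈ A inside some U ∈ F₀
      intro O hO
      by_cases hOX : O = X
      · exact ⟨UZ, hUZF, hOX ▸ (Finset.Subset.trans hXZ hZUZ)⟩
      · exact g1a O (Finset.mem_erase.2 ⟨hOX, hO⟩)
    · -- every O ∈ B inside some U ∈ F₀
      intro O hO
      by_cases hOY : (X ∩ O).Nonempty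
      · refine ⟨UZ, hUZF, Finset.Subset.trans ?_ hZUZ⟩
        exact hYsZ O (Finset.mem_filter.2 ⟨hO, hOY⟩)
      · exact g1b O (Finset.mem_insert_of_mem (Finset.mem_filter.2 ⟨hO, hOY⟩))
    · -- covering
      intro U hU a ha
      rcases g1c U hU a ha with ⟨O, hO, haO, hOU⟩ | ⟨O, hO, haO, hOU⟩
      · exact Or.inl ⟨O, (hA'A O hO).1, haO, hOU⟩
      · rcases Finset.mem_insert.1 hO with rfl | hO
        · -- O = Z
          rcases hmemZ a haO with haX | ⟨Y, hY, haY⟩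
          · exact Or.inl ⟨X, hX, haX, Finset.Subset.trans hXZ hOU⟩
          · exact Or.inr ⟨Y, hYsB Y hY, haY, Finset.Subset.trans (hYsZ Y hY) hOU⟩
        · exact Or.inr ⟨O, hYcB O hO, haO, hOU⟩
    · -- K property
      intro M hM
      rcases Finset.mem_union.1 hM with hM | hM
      · obtain ⟨X', hX', U, hU, hXU, hMX', hprop⟩ := g2 M hM
        refine ⟨X', (hA'A X' hX').1, U, hU, hXU, hMX', ?_⟩
        intro a haM
        obtain ⟨O, hO, haO, hOU, hOXM⟩ := hprop a haM
        rcases Finset.mem_insert.1 hO with rfl | hO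
        · -- O = Z
          rcases hmemZ a haO with haX | ⟨Y, hY, haY⟩
          · exact absurd haX (Finset.disjoint_left.1 (hA'X X' hX') (hMX' haM))
          · refine ⟨Y, hYsB Y hY, haY, Finset.Subset.trans (hYsZ Y hY) hOU, ?_⟩
            exact Finset.Subset.trans (Finset.inter_subset_inter (hYsZ Y hY)
              (Finset.Subset.refl X')) hOXM
        · exact ⟨O, hYcB O hO, haO, hOU, hOXM⟩
      · obtain ⟨Y, hY, rfl⟩ := hKnewmem M hM
        refine ⟨X, hX, UZ, hUZF, Finset.Subset.trans hXZ hZUZ, Finset.inter_subset_left, ?_⟩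
        intro a haM
        refine ⟨Y, hYsB Y hY, (Finset.mem_inter.1 haM).2,
          Finset.Subset.trans (hYsZ Y hY) hZUZ, ?_⟩
        intro b hb
        rcases Finset.mem_inter.1 hb with ⟨hbY, hbX⟩
        exact Finset.mem_inter.2 ⟨hbX, hbY⟩
    · -- sums
      have sumA : ∑ O ∈ A, h O = h X + ∑ O ∈ A', h O := (Finset.add_sum_erase A h hX).symm
      have sumB : ∑ O ∈ B, h O = (∑ Y ∈ Ys, h Y) + ∑ Y ∈ Yc, h Y :=
        (Finset.sum_filter_add_sum_filter_not B _ h).symm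
      have hZYc' : Z ∉ Yc := by
        intro hZin
        have := hYcX Z hZin
        rcases hXne with ⟨b, hb⟩
        have : b ∈ X ∩ Z := Finset.mem_inter.2 ⟨hb, hXZ hb⟩
        rw [hYcX Z hZin] at this; simp at this
      have sumB' : ∑ O ∈ B', h O = h Z + ∑ Y ∈ Yc, h Y := Finset.sum_insert hZYc'
      have sumK : ∑ M ∈ K, h M = (∑ M ∈ K₀, h M) + ∑ N ∈ Knew, h N :=
        Finset.sum_union hK₀Knew
      have sumKnew : ∑ N ∈ Knew, h N = ∑ Y ∈ Ys, h (X ∩ Y) := by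
        rw [hKnew]
        refine Finset.sum_image ?_
        intro Y₁ hY₁ Y₂ hY₂ he
        by_contra hne
        have hdisj := hB.2 Y₁ (hYsB _ hY₁) Y₂ (hYsB _ hY₂) hne
        rcases hYsm Y₁ hY₁ with ⟨b, hb⟩
        have hb2 : b ∈ X ∩ Y₂ := (show X ∩ Y₁ = X ∩ Y₂ from he) ▸ hb
        exact Finset.disjoint_left.1 hdisj (Finset.mem_inter.1 hb).2 (Finset.mem_inter.1 hb2).2
      have hstar := star h hsup X Ys
        (fun Y₁ h₁ Y₂ h₂ hne => hB.2 Y₁ (hYsB _ h₁) Y₂ (hYsB _ h₂) hne) hYsm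
      rw [← hS, ← hZ] at hstar
      -- g3 : ∑_{A'} + ∑_{B'} ≤ ∑_{K₀} + ∑_{F₀}
      rw [sumB'] at g3
      rw [sumA, sumB, sumK, sumKnew]
      linarith [g3, hstar]

lemma perEdge (P₁ P₂ K F : Finset (Finset V)) (hF : IsSubpartition F)
    (cov : ∀ U ∈ F, ∀ a ∈ U, (∃ O ∈ P₁, a ∈ O ∧ O ⊆ U) ∨ (∃ O ∈ P₂, a ∈ O ∧ O ⊆ U))
    (hK : ∀ M ∈ K, ∃ X ∈ P₁, ∃ U ∈ F, X ⊆ U ∧ M ⊆ X ∧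
        ∀ a ∈ M, ∃ O ∈ P₂, a ∈ O ∧ O ⊆ U ∧ O ∩ X ⊆ M)
    (f : V × V) :
    ((if ∃ M ∈ K, edgeEnters f M then 1 else 0) +
      (if ∃ U ∈ F, edgeEnters f U then 1 else 0) : ℕ) ≤
      (if ∃ X ∈ P₁, edgeEnters f X then 1 else 0) +
      (if ∃ Y ∈ P₂, edgeEnters f Y then 1 else 0) := by
  by_cases hk : ∃ M ∈ K, edgeEnters f M
  · obtain ⟨M, hM, hent⟩ := hk
    -- normalize endpoints
    obtain ⟨a, b, haM, hbM, hiff⟩ : ∃ a b : V, a ∈ M ∧ b ∉ M ∧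
        ∀ S : Finset V, edgeEnters f S ↔ ((a ∈ S ∧ b ∉ S) ∨ (b ∈ S ∧ a ∉ S)) := by
      rcases hent with ⟨h1, h2⟩ | ⟨h1, h2⟩
      · exact ⟨f.1, f.2, h1, h2, fun S => Iff.rfl⟩
      · exact ⟨f.2, f.1, h1, h2, fun S => by unfold edgeEnters; tauto⟩
    obtain ⟨X, hXP, U, hUF, hXU, hMX, hprop⟩ := hK M hM
    obtain ⟨O, hOP, haO, hOU, hOXM⟩ := hprop a haM
    have haX : a ∈ X := hMX haM
    have haU : a ∈ U := hXU haX
    have hkone : (if ∃ M ∈ K, edgeEnters f M then 1 else 0 : ℕ) = 1 := by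
      simp [show ∃ M ∈ K, edgeEnters f M from ⟨M, hM, hent⟩]
    by_cases hw : ∃ U' ∈ F, edgeEnters f U'
    · -- both entered : show both P₁ and P₂ entered
      obtain ⟨U', hU'F, hent'⟩ := hw
      have hbU : b ∉ U := by
        by_cases hUU : U' = U
        · subst hUU
          rcases (hiff U').1 hent' with ⟨_, hb⟩ | ⟨_, ha⟩
          · exact hb
          · exact absurd haU ha
        · have hdis : Disjoint U U' := hF.2 U hUF U' hU'F (fun he => hUU he.symm)
          rcases (hiff U').1 hent' with ⟨haU', _⟩ | ⟨hbU', _⟩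
          · exact absurd haU' (Finset.disjoint_left.1 hdis haU)
          · exact fun hbU => Finset.disjoint_left.1 hdis hbU hbU'
      have hbX : b ∉ X := fun hb => hbU (hXU hb)
      have hbO : b ∉ O := fun hb => hbU (hOU hb)
      have hp1 : ∃ X' ∈ P₁, edgeEnters f X' := ⟨X, hXP, (hiff X).2 (Or.inl ⟨haX, hbX⟩)⟩
      have hp2 : ∃ Y ∈ P₂, edgeEnters f Y := ⟨O, hOP, (hiff O).2 (Or.inl ⟨haO, hbO⟩)⟩
      have hwx : ∃ U'' ∈ F, edgeEnters f U'' := ⟨U', hU'F, hent'⟩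
      simp [hkone, hp1, hp2, hwx]
    · -- only K entered ; show some P entered
      by_cases hbX : b ∈ X
      · have hbO : b ∉ O := fun hb => hbM (hOXM (Finset.mem_inter.2 ⟨hb, hbX⟩))
        have hp2 : ∃ Y ∈ P₂, edgeEnters f Y := ⟨O, hOP, (hiff O).2 (Or.inl ⟨haO, hbO⟩)⟩
        simp [hkone, hp2, hw]
      · have hp1 : ∃ X' ∈ P₁, edgeEnters f X' := ⟨X, hXP, (hiff X).2 (Or.inl ⟨haX, hbX⟩)⟩
        simp [hkone, hp1, hw]
  · by_cases hw : ∃ U' ∈ F, edgeEnters f U'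
    · obtain ⟨U', hU'F, hent'⟩ := hw
      obtain ⟨p, q, hpU, hqU, hiff⟩ : ∃ p q : V, p ∈ U' ∧ q ∉ U' ∧
          ∀ S : Finset V, edgeEnters f S ↔ ((p ∈ S ∧ q ∉ S) ∨ (q ∈ S ∧ p ∉ S)) := by
        rcases hent' with ⟨h1, h2⟩ | ⟨h1, h2⟩
        · exact ⟨f.1, f.2, h1, h2, fun S => Iff.rfl⟩
        · exact ⟨f.2, f.1, h1, h2, fun S => by unfold edgeEnters; tauto⟩
      rcases cov U' hU'F p hpU with ⟨O, hO, hpO, hOU'⟩ | ⟨O, hO, hpO, hOU'⟩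
      · have hqO : q ∉ O := fun hq => hqU (hOU' hq)
        have hp1 : ∃ X ∈ P₁, edgeEnters f X := ⟨O, hO, (hiff O).2 (Or.inl ⟨hpO, hqO⟩)⟩
        have hwx : ∃ U'' ∈ F, edgeEnters f U'' := ⟨U', hU'F, hent'⟩
        simp [hk, hp1, hwx]
      · have hqO : q ∉ O := fun hq => hqU (hOU' hq)
        have hp2 : ∃ Y ∈ P₂, edgeEnters f Y := ⟨O, hO, (hiff O).2 (Or.inl ⟨hpO, hqO⟩)⟩
        have hwx : ∃ U'' ∈ F, edgeEnters f U'' := ⟨U', hU'F, hent'⟩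
        simp [hk, hp2, hwx]
    · simp [hk, hw]

lemma sum_boole_card {α : Type*} (P : Finset α) (p : α → Prop) :
    (∑ x ∈ P, if p x then (1:ℕ) else 0) = (P.filter p).card := by
  simpa using (Finset.sum_boole (s := P) (p := p) (h := fun x => Classical.propDecidable (p x)))

lemma sum_inDeg_le (Eo : Multiset (V × V)) (P : Finset (Finset V))
    (hP : IsSubpartition P) :
    ∑ X ∈ P, inDeg Eo X ≤ (Eo.filter fun a => ∃ X ∈ P, arcEnters a X).card := by
  induction Eo using Multiset.induction_on with
  | empty => simp [inDeg]
  | cons a s ih =>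
    have hdeg : ∀ X, inDeg (a ::ₘ s) X = (if arcEnters a X then 1 else 0) + inDeg s X := by
      intro X
      unfold inDeg
      by_cases h : arcEnters a X
      · rw [Multiset.filter_cons_of_pos (p := fun a => arcEnters a X) _ h]; simp [h]; omega
      · rw [Multiset.filter_cons_of_neg (p := fun a => arcEnters a X) _ h]; simp [h]
    have hfil : ((a ::ₘ s).filter fun x => ∃ X ∈ P, arcEnters x X).card
        = (if ∃ X ∈ P, arcEnters a X then 1 else 0)
          + (s.filter fun x => ∃ X ∈ P, arcEnters x X).card := by
      by_cases h : ∃ X ∈ P, arcEnters a X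
      · rw [Multiset.filter_cons_of_pos (p := fun x => ∃ X ∈ P, arcEnters x X) _ h]
        simp [h]; omega
      · rw [Multiset.filter_cons_of_neg (p := fun x => ∃ X ∈ P, arcEnters x X) _ h]
        simp [h]
    simp only [hdeg, hfil, Finset.sum_add_distrib]
    have hone : (∑ X ∈ P, if arcEnters a X then (1:ℕ) else 0)
        ≤ (if ∃ X ∈ P, arcEnters a X then 1 else 0) := by
      rw [sum_boole_card]
      by_cases h : ∃ X ∈ P, arcEnters a X
      · simp only [h, if_true]
        refine Finset.card_le_one.2 ?_
        intro X hX Y hY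
        rw [Finset.mem_filter] at hX hY
        by_contra hne
        exact Finset.disjoint_left.1 (hP.2 X hX.1 Y hY.1 hne) hX.2.1 hY.2.1
      · simp only [h, if_false, Nat.le_zero, Finset.card_eq_zero, Finset.filter_eq_empty_iff]
        intro X hX hent
        exact h ⟨X, hX, hent⟩
    omega

lemma rel_filter_card_le (E Eo : Multiset (V × V)) (P : Finset (Finset V))
    (hrel : IsOrientationOf E Eo) :
    (Eo.filter fun a => ∃ X ∈ P, arcEnters a X).card
      ≤ (E.filter fun e => ∃ X ∈ P, edgeEnters e X).card := by
  induction hrel with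
  | zero => simp
  | @cons e a E' Eo' hea hrel ih =>
    have himp : (∃ X ∈ P, arcEnters a X) → (∃ X ∈ P, edgeEnters e X) := by
      rintro ⟨X, hX, h1, h2⟩
      rcases hea with rfl | rfl
      · exact ⟨X, hX, Or.inr ⟨h1, h2⟩⟩
      · exact ⟨X, hX, Or.inl ⟨h1, h2⟩⟩
    by_cases h : ∃ X ∈ P, arcEnters a X
    · rw [Multiset.filter_cons_of_pos (p := fun a => ∃ X ∈ P, arcEnters a X) _ h,
        Multiset.filter_cons_of_pos (p := fun e => ∃ X ∈ P, edgeEnters e X) _ (himp h)]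
      simpa using ih
    · rw [Multiset.filter_cons_of_neg (p := fun a => ∃ X ∈ P, arcEnters a X) _ h]
      exact le_trans ih (Multiset.card_le_card
        (Multiset.filter_le_filter _ (Multiset.le_cons_self E' e)))

lemma ind_submod (a : V × V) (X Y : Finset V) :
    ((if arcEnters a (X ∩ Y) then (1:ℤ) else 0) + (if arcEnters a (X ∪ Y) then 1 else 0)) ≤
      (if arcEnters a X then 1 else 0) + (if arcEnters a Y then 1 else 0) := by
  rcases a with ⟨x, y⟩
  by_cases hyX : y ∈ X <;> by_cases hyY : y ∈ Y <;> by_cases hxX : x ∈ X <;>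
    by_cases hxY : x ∈ Y <;>
    simp [arcEnters, Finset.mem_inter, Finset.mem_union, hyX, hyY, hxX, hxY]

lemma inDeg_cons (a : V × V) (s : Multiset (V × V)) (X : Finset V) :
    inDeg (a ::ₘ s) X = (if arcEnters a X then 1 else 0) + inDeg s X := by
  unfold inDeg
  by_cases h : arcEnters a X
  · rw [Multiset.filter_cons_of_pos (p := fun a => arcEnters a X) _ h]; simp [h]; omega
  · rw [Multiset.filter_cons_of_neg (p := fun a => arcEnters a X) _ h]; simp [h]

lemma backward (E : Multiset (V × V)) : ∀ (h : Finset V → ℤ),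
    (∀ X Y : Finset V, (X ∩ Y).Nonempty → h X + h Y ≤ h (X ∩ Y) + h (X ∪ Y)) →
    (∀ P, IsSubpartition P → (∑ X ∈ P, h X) ≤ (cnt E P : ℤ)) →
    ∃ Eo, IsOrientationOf E Eo ∧ ∀ X : Finset V, X.Nonempty → h X ≤ (inDeg Eo X : ℤ) := by
  induction E using Multiset.induction_on with
  | empty =>
    intro h hsup cond
    refine ⟨0, Multiset.Rel.zero, ?_⟩
    intro X hX
    have hsp : IsSubpartition {X} := by
      constructor
      · intro Y hY; rw [Finset.mem_singleton] at hY; exact hY ▸ hX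
      · intro Y hY Z hZ hne
        rw [Finset.mem_singleton] at hY hZ
        exact absurd (hY.trans hZ.symm) hne
    have := cond {X} hsp
    simpa [cnt, inDeg] using this
  | cons e E' ih =>
    intro h hsup cond
    have key : ∃ a : V × V, (a = e ∨ a = Prod.swap e) ∧
        ∀ P, IsSubpartition P →
          (∑ X ∈ P, (h X - if arcEnters a X then 1 else 0)) ≤ (cnt E' P : ℤ) := by
      by_contra hcon
      push_neg at hcon
      obtain ⟨P₁, hP₁sub, hP₁⟩ := hcon e (Or.inl rfl)
      obtain ⟨P₂, hP₂sub, hP₂⟩ := hcon (Prod.swap e) (Or.inr rfl)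
      obtain ⟨u, v⟩ := e
      -- analyze P₁
      have anal : ∀ (x y : V) (P : Finset (Finset V)), IsSubpartition P →
          ((cnt E' P : ℤ) < ∑ X ∈ P, (h X - if arcEnters (x,y) X then 1 else 0)) →
          (∀ P', IsSubpartition P' → (∑ X ∈ P', h X) ≤ (cnt ((x,y) ::ₘ E') P' : ℤ)) →
          (∀ X ∈ P, y ∉ X) ∧ (cnt E' P : ℤ) + 1 ≤ ∑ X ∈ P, h X := by
        intro x y P hPsub hPlt hcond
        have hsplit : ∑ X ∈ P, (h X - if arcEnters (x,y) X then (1:ℤ) else 0)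
            = (∑ X ∈ P, h X) - ∑ X ∈ P, (if arcEnters (x,y) X then (1:ℤ) else 0) :=
          Finset.sum_sub_distrib _ _
        have hindnn : (0:ℤ) ≤ ∑ X ∈ P, (if arcEnters (x,y) X then (1:ℤ) else 0) :=
          Finset.sum_nonneg (fun X _ => by positivity)
        have hcnt : (cnt ((x,y) ::ₘ E') P : ℤ)
            = (if ∃ X ∈ P, edgeEnters (x,y) X then (1:ℤ) else 0) + cnt E' P := by
          rw [cnt_cons]
          split <;> push_cast <;> ring
        have hcondP := hcond P hPsub
        rw [hcnt] at hcondP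
        have hite_le : (if ∃ X ∈ P, edgeEnters (x,y) X then (1:ℤ) else 0) ≤ 1 := by
          split <;> norm_num
        -- derive sum of indicators = 0 and entering
        have h0 : ∑ X ∈ P, (if arcEnters (x,y) X then (1:ℤ) else 0) = 0 := by
          rw [hsplit] at hPlt
          by_contra hne
          have : (1:ℤ) ≤ ∑ X ∈ P, (if arcEnters (x,y) X then (1:ℤ) else 0) := by
            omega
          linarith
        have hent : ∃ X ∈ P, edgeEnters (x,y) X := by
          rw [hsplit, h0] at hPlt
          by_contra hne
          rw [if_neg hne] at hcondP
          linarith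
        have hall : ∀ X ∈ P, ¬ arcEnters (x,y) X := by
          intro X hX
          have := (Finset.sum_eq_zero_iff_of_nonneg
            (fun X _ => by positivity)).1 h0 X hX
          intro hc
          rw [if_pos hc] at this
          norm_num at this
        obtain ⟨X₁, hX₁P, hX₁ent⟩ := hent
        have hX₁ : x ∈ X₁ ∧ y ∉ X₁ := by
          rcases hX₁ent with h' | h'
          · exact h'
          · exact absurd ⟨h'.1, h'.2⟩ (hall X₁ hX₁P)
        constructor
        · intro X hX hyX
          have hxX : x ∈ X := by
            by_contra hxX
            exact hall X hX ⟨hyX, hxX⟩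
          have hXX₁ : X = X₁ := by
            by_contra hne
            exact Finset.disjoint_left.1 (hPsub.2 X hX X₁ hX₁P hne) hxX hX₁.1
          exact hX₁.2 (hXX₁ ▸ hyX)
        · rw [hsplit, h0] at hPlt
          omega
      have anal1 := anal u v P₁ hP₁sub hP₁ cond
      have cond2 : ∀ P', IsSubpartition P' →
          (∑ X ∈ P', h X) ≤ (cnt ((v,u) ::ₘ E') P' : ℤ) := by
        intro P' hP'
        have heq : cnt ((v,u) ::ₘ E') P' = cnt ((u,v) ::ₘ E') P' := by
          rw [cnt_cons, cnt_cons]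
          have : (∃ X ∈ P', edgeEnters (v,u) X) ↔ (∃ X ∈ P', edgeEnters (u,v) X) := by
            unfold edgeEnters
            constructor <;> rintro ⟨X, hX, hc⟩ <;> exact ⟨X, hX, by tauto⟩
          rw [if_congr this rfl rfl]
        rw [heq]
        exact cond P' hP'
      have anal2 := anal v u P₂ hP₂sub hP₂ cond2
      obtain ⟨hvP₁, key1⟩ := anal1
      obtain ⟨huP₂, key2⟩ := anal2
      -- build
      obtain ⟨K, F, hKsub, hFsub, _, _, cov, g2, gsum⟩ := build h hsup P₁ P₂ hP₁sub hP₂sub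
      have noK : ¬ ∃ M ∈ K, edgeEnters (u,v) M := by
        rintro ⟨M, hM, hent⟩
        obtain ⟨X, hXP, U, hUF, _, hMX, hprop⟩ := g2 M hM
        have hv : v ∉ M := fun hv => hvP₁ X hXP (hMX hv)
        have hu : u ∉ M := by
          intro hu
          obtain ⟨O, hOP, huO, _, _⟩ := hprop u hu
          exact huP₂ O hOP huO
        rcases hent with ⟨h1, _⟩ | ⟨h1, _⟩
        · exact hu h1
        · exact hv h1
      have condK : (∑ M ∈ K, h M) ≤ (cnt E' K : ℤ) := by
        have := cond K hKsub
        rw [cnt_cons, if_neg noK] at this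
        simpa using this
      have condF : (∑ U ∈ F, h U) ≤ (cnt E' F : ℤ) + 1 := by
        have := cond F hFsub
        rw [cnt_cons] at this
        have h1 : (if ∃ X ∈ F, edgeEnters (u,v) X then 1 else 0) ≤ 1 := by
          split <;> norm_num
        push_cast at this ⊢
        omega
      have cntpair : cnt E' K + cnt E' F ≤ cnt E' P₁ + cnt E' P₂ := by
        unfold cnt
        exact card_filter_pair_le E' (fun f => ∃ X ∈ K, edgeEnters f X)
          (fun f => ∃ X ∈ F, edgeEnters f X) (fun f => ∃ X ∈ P₁, edgeEnters f X)
          (fun f => ∃ X ∈ P₂, edgeEnters f X) (perEdge P₁ P₂ K F hFsub cov g2)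
      have : (cnt E' P₁ : ℤ) + cnt E' P₂ + 2 ≤ (cnt E' P₁ : ℤ) + cnt E' P₂ + 1 := by
        have hc : (cnt E' K : ℤ) + cnt E' F ≤ (cnt E' P₁ : ℤ) + cnt E' P₂ := by
          exact_mod_cast cntpair
        linarith [key1, key2, gsum, condK, condF]
      linarith
    obtain ⟨a, ha, cond'⟩ := key
    have hsup' : ∀ X Y : Finset V, (X ∩ Y).Nonempty →
        (h X - if arcEnters a X then (1:ℤ) else 0) + (h Y - if arcEnters a Y then 1 else 0) ≤
        (h (X ∩ Y) - if arcEnters a (X ∩ Y) then 1 else 0) +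
        (h (X ∪ Y) - if arcEnters a (X ∪ Y) then 1 else 0) := by
      intro X Y hXY
      have h1 := hsup X Y hXY
      have h2 := ind_submod a X Y
      linarith
    obtain ⟨Eo', hor', hcov'⟩ := ih _ hsup' cond'
    refine ⟨a ::ₘ Eo', Multiset.Rel.cons ha hor', ?_⟩
    intro X hX
    have := hcov' X hX
    rw [inDeg_cons]
    push_cast
    split at this <;> split <;> simp_all <;> linarith



/-- **Frank's orientation theorem.** Let `G = (V, E)` be an undirected graph and
`h` an integer-valued intersecting supermodular set function with `h(V) = 0`.
There is an orientation of `E` in which `d⁻(X) ≥ h(X)` for every nonempty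
`X ⊆ V` iff `e_E(𝒫) ≥ Σ_{X∈𝒫} h(X)` for every subpartition `𝒫` of `V`. -/
theorem frank_orientation
    (V : Type) [Fintype V] [DecidableEq V]
    (E : Multiset (V × V))
    (h : Finset V → ℤ)
    (hsup : ∀ X Y : Finset V, (X ∩ Y).Nonempty →
      h X + h Y ≤ h (X ∩ Y) + h (X ∪ Y))
    (hV : h Finset.univ = 0) :
    (∃ Eo, IsOrientationOf E Eo ∧
        ∀ X : Finset V, X.Nonempty → h X ≤ (inDeg Eo X : ℤ)) ↔
    ∀ P : Finset (Finset V), IsSubpartition P →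
      (∑ X ∈ P, h X) ≤ (eMixed E 0 P : ℤ) := by
  have hmix : ∀ P : Finset (Finset V), eMixed E 0 P = cnt E P := by
    intro P
    unfold eMixed cnt
    simp
  constructor
  · rintro ⟨Eo, hor, hcov⟩ P hP
    have h1 : (∑ X ∈ P, h X) ≤ ∑ X ∈ P, (inDeg Eo X : ℤ) :=
      Finset.sum_le_sum (fun X hX => hcov X (hP.1 X hX))
    have h2 : ∑ X ∈ P, (inDeg Eo X : ℤ) = ((∑ X ∈ P, inDeg Eo X : ℕ) : ℤ) := by
      push_cast
      rfl
    have h3 := sum_inDeg_le Eo P hP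
    have h4 := rel_filter_card_le E Eo P hor
    rw [hmix]
    unfold cnt
    have h5 : ((∑ X ∈ P, inDeg Eo X : ℕ) : ℤ)
        ≤ ((E.filter fun e => ∃ X ∈ P, edgeEnters e X).card : ℤ) := by
      exact_mod_cast le_trans h3 h4
    linarith
  · intro hcond
    refine backward E h hsup (fun P hP => ?_)
    have := hcond P hP
    rwa [hmix] at this


end ArborPaper
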